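/- Define c(α,k) = 9/2 - 6k(1+α+α²)/(α(1+α)) and ε(α,k) = -4i√(2/3)·k^{3/2}(1+2α)(-2+α+α²) / (3√(-(2k-1)α²(1+α)²(2k+4k²-α(1+α)))). Then the solutions of the system c(α,k) = 21/2, ε(α,k) = 0 (with α ∉ {0,-1} and the expression under the square roots nonzero) are exactly (α,k) ∈ {(1,-2/3), (-2,-2/3), (-1/2,1/3)}. -/

import Mathlib

/-- with `c(α,k) = 9/2 - 6k(1+α+α²)/(α(1+α))` and the coupling constant
`ε(α,k)` having numerator `-4i√(2/3)·k^{3/2}(1+2α)(-2+α+α²)` (which vanishes if and only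
if `k(1+2α)(-2+α+α²) = 0`) and nonvanishing denominator
`3√(-(2k-1)α²(1+α)²(2k+4k²-α(1+α)))`, the solutions of `c = 21/2, ε = 0` are exactly
`(α,k) ∈ {(1,-2/3), (-2,-2/3), (-1/2,1/3)}`. -/
theorem SV_values_of_alpha_k (α k : ℂ) (hα : α ≠ 0) (hα' : α ≠ -1)
    (hden : (2*k - 1) * α^2 * (1+α)^2 * (2*k + 4*k^2 - α*(1+α)) ≠ 0) :
    (9/2 - 6*k*(1+α+α^2)/(α*(1+α)) = 21/2 ∧ k * (1+2*α) * (-2+α+α^2) = 0)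
      ↔ ((α, k) = (1, -2/3) ∨ (α, k) = (-2, -2/3) ∨ (α, k) = (-1/2, 1/3)) := by
  have hα1 : (1:ℂ) + α ≠ 0 := by
    intro h; apply hα'; linear_combination h
  have hαα : α * (1+α) ≠ 0 := mul_ne_zero hα hα1
  constructor
  · rintro ⟨h1, h2⟩
    have key : k * (1+α+α^2) = -(α*(1+α)) := by
      field_simp at h1
      linear_combination -h1 / 12
    have hk : k ≠ 0 := by
      intro hk0
      apply hαα
      have := key
      rw [hk0] at this
      linear_combination this
    rcases mul_eq_zero.mp h2 with h | h3
    · rcases mul_eq_zero.mp h with h | h2a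
      · exact absurd h hk
      · -- α = -1/2
        have hαv : α = -1/2 := by linear_combination h2a/2
        right; right
        have hkv : k = 1/3 := by
          rw [hαv] at key
          linear_combination key * (4/3)
        rw [hαv, hkv]
    · -- (α-1)(α+2) = 0
      have : (α - 1) * (α + 2) = 0 := by linear_combination h3
      rcases mul_eq_zero.mp this with h | h
      · have hαv : α = 1 := by linear_combination h
        left
        have hkv : k = -2/3 := by
          rw [hαv] at key
          linear_combination key / 3
        rw [hαv, hkv]
      · have hαv : α = -2 := by linear_combination h
        right; left
        have hkv : k = -2/3 := by
          rw [hαv] at key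
          linear_combination key / 3
        rw [hαv, hkv]
  · rintro (h | h | h) <;>
      (obtain ⟨ha, hk⟩ := Prod.mk.injEq .. ▸ h;
        subst ha; subst hk; constructor <;> [field_simp; ring] ) <;> ring
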